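/- The softmax map is 2-Lipschitz from (ℝ^n, ‖·‖_∞) to (Δ_n, ‖·‖_1): for any logit vectors θ, θ', ‖softmax(θ) − softmax(θ')‖_1 ≤ 2‖θ − θ'‖_∞. -/

import Mathlib

open Finset

/-- sinh t ≤ t * cosh t for t ≥ 0. -/
lemma sinh_le_mul_cosh {t : ℝ} (ht : 0 ≤ t) : Real.sinh t ≤ t * Real.cosh t := by
  have hmono : MonotoneOn (fun s : ℝ => s * Real.cosh s - Real.sinh s) (Set.Ici 0) := by
    apply monotoneOn_of_deriv_nonneg (convex_Ici 0)
    · exact (((continuous_id.mul Real.continuous_cosh).sub Real.continuous_sinh).continuousOn)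
    · intro x _
      exact (((hasDerivAt_id x).mul (Real.hasDerivAt_cosh x)).sub
        (Real.hasDerivAt_sinh x)).differentiableAt.differentiableWithinAt
    · intro x hx
      have hx : (0:ℝ) < x := by simpa using hx
      have hd : HasDerivAt (fun s : ℝ => s * Real.cosh s - Real.sinh s)
          (1 * Real.cosh x + x * Real.sinh x - Real.cosh x) x :=
        ((hasDerivAt_id x).mul (Real.hasDerivAt_cosh x)).sub (Real.hasDerivAt_sinh x)
      rw [hd.deriv]
      have : 0 ≤ x * Real.sinh x :=
        mul_nonneg hx.le (by rw [Real.sinh_nonneg_iff]; exact hx.le)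
      nlinarith
  have h0 := hmono (Set.self_mem_Ici) (Set.mem_Ici.mpr ht) ht
  simp only [Real.cosh_zero, Real.sinh_zero, mul_one, zero_mul, sub_zero] at h0
  linarith

/-- 1 - exp(-2M) ≤ M * (1 + exp(-2M)) for M ≥ 0. -/
lemma one_sub_exp_le {M : ℝ} (hM : 0 ≤ M) :
    1 - Real.exp (-(2*M)) ≤ M * (1 + Real.exp (-(2*M))) := by
  have h := sinh_le_mul_cosh hM
  rw [Real.sinh_eq, Real.cosh_eq] at h
  have hpos : 0 < Real.exp (-M) := Real.exp_pos _
  have he : Real.exp (-(2*M)) = Real.exp (-M) * Real.exp (-M) := by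
    rw [← Real.exp_add]; ring_nf
  have hprod : Real.exp M * Real.exp (-M) = 1 := by
    rw [← Real.exp_add]; simp
  nlinarith [Real.exp_pos M]

/-- softmax is 2-Lipschitz from (ℝⁿ, ‖·‖_∞) to (Δₙ, ‖·‖₁):
‖softmax θ − softmax θ'‖₁ ≤ 2 ‖θ − θ'‖_∞. -/
theorem softmax_two_lipschitz (n : ℕ) [NeZero n] (θ θ' : Fin n → ℝ) :
    ∑ a, |Real.exp (θ a) / (∑ b, Real.exp (θ b))
            - Real.exp (θ' a) / (∑ b, Real.exp (θ' b))|
      ≤ 2 * Finset.univ.sup' Finset.univ_nonempty (fun a => |θ a - θ' a|) := by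
  set M := Finset.univ.sup' Finset.univ_nonempty (fun a => |θ a - θ' a|) with hMdef
  have hMbound : ∀ a, |θ a - θ' a| ≤ M := fun a =>
    Finset.le_sup' (fun a => |θ a - θ' a|) (Finset.mem_univ a)
  obtain ⟨a0⟩ := Finset.univ_nonempty (α := Fin n)
  have hM0 : 0 ≤ M := le_trans (abs_nonneg _) (hMbound a0)
  set S : ℝ := ∑ b, Real.exp (θ b) with hSdef
  set S' : ℝ := ∑ b, Real.exp (θ' b) with hS'def
  have hS : 0 < S := Finset.sum_pos (fun b _ => Real.exp_pos _) ⟨a0, Finset.mem_univ a0⟩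
  have hS' : 0 < S' := Finset.sum_pos (fun b _ => Real.exp_pos _) ⟨a0, Finset.mem_univ a0⟩
  set p : Fin n → ℝ := fun a => Real.exp (θ a) / S with hpdef
  set q : Fin n → ℝ := fun a => Real.exp (θ' a) / S' with hqdef
  have hp0 : ∀ a, 0 < p a := fun a => div_pos (Real.exp_pos _) hS
  have hq0 : ∀ a, 0 < q a := fun a => div_pos (Real.exp_pos _) hS'
  -- exp comparisons
  have hexp1 : ∀ a, Real.exp (θ a) ≤ Real.exp M * Real.exp (θ' a) := by
    intro a
    rw [← Real.exp_add]
    apply Real.exp_le_exp.mpr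
    have := hMbound a
    rw [abs_le] at this
    linarith [this.2]
  have hexp2 : ∀ a, Real.exp (θ' a) ≤ Real.exp M * Real.exp (θ a) := by
    intro a
    rw [← Real.exp_add]
    apply Real.exp_le_exp.mpr
    have := hMbound a
    rw [abs_le] at this
    linarith [this.1]
  have hSle : S ≤ Real.exp M * S' := by
    rw [hSdef, hS'def, Finset.mul_sum]
    exact Finset.sum_le_sum fun b _ => hexp1 b
  have hS'le : S' ≤ Real.exp M * S := by
    rw [hSdef, hS'def, Finset.mul_sum]
    exact Finset.sum_le_sum fun b _ => hexp2 b
  set x : ℝ := Real.exp (-(2*M)) with hxdef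
  have hx0 : 0 < x := Real.exp_pos _
  have hxE : x * (Real.exp M * Real.exp M) = 1 := by
    rw [hxdef, ← Real.exp_add, ← Real.exp_add]; ring_nf; exact Real.exp_zero
  have hE0 : 0 < Real.exp M := Real.exp_pos _
  -- p a ≥ x * q a and q a ≥ x * p a
  have hpq : ∀ a, x * q a ≤ p a := by
    intro a
    show x * (Real.exp (θ' a) / S') ≤ Real.exp (θ a) / S
    have h1 : Real.exp (θ' a) * S ≤ (Real.exp M * Real.exp (θ a)) * (Real.exp M * S') :=
      mul_le_mul (hexp2 a) hSle hS.le (by positivity)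
    calc x * (Real.exp (θ' a) / S') = x * Real.exp (θ' a) * S /(S' * S) := by
              field_simp
        _ ≤ x * ((Real.exp M * Real.exp (θ a)) * (Real.exp M * S')) / (S' * S) := by
              apply div_le_div_of_nonneg_right _ (by positivity)
              · nlinarith
        _ = (x * (Real.exp M * Real.exp M)) * (Real.exp (θ a) * S') / (S' * S) := by ring
        _ = Real.exp (θ a) / S := by rw [hxE]; field_simp
  have hqp : ∀ a, x * p a ≤ q a := by
    intro a
    show x * (Real.exp (θ a) / S) ≤ Real.exp (θ' a) / S'
    calc x * (Real.exp (θ a) / S) = x * Real.exp (θ a) * S' /(S * S') := by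
            field_simp
      _ ≤ x * ((Real.exp M * Real.exp (θ' a)) * (Real.exp M * S)) / (S * S') := by
            apply div_le_div_of_nonneg_right _ (by positivity)
            · nlinarith [mul_le_mul (hexp1 a) hS'le hS'.le (by positivity : (0:ℝ) ≤ Real.exp M * Real.exp (θ' a))]
      _ = (x * (Real.exp M * Real.exp M)) * (Real.exp (θ' a) * S) / (S * S') := by ring
      _ = Real.exp (θ' a) / S' := by rw [hxE]; field_simp
  -- pointwise bound : |p a - q a| ≤ (1 - x) * (p a + q a + |p a - q a|)/2
  have hxle1 : x ≤ 1 := by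
    rw [hxdef]
    exact Real.exp_le_one_iff.mpr (by linarith)
  have hpoint : ∀ a, |p a - q a| ≤ (1 - x) * ((p a + q a + |p a - q a|)/2) := by
    intro a
    have h1 := hpq a
    have h2 := hqp a
    rcases le_total (q a) (p a) with h | h
    · rw [abs_of_nonneg (by linarith)]
      nlinarith [hp0 a]
    · rw [abs_of_nonpos (by linarith)]
      nlinarith [hq0 a]
  -- sum up
  set D : ℝ := ∑ a, |p a - q a| with hDdef
  have hsump : ∑ a, p a = 1 := by
    rw [hpdef, ← Finset.sum_div, ← hSdef, div_self hS.ne']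
  have hsumq : ∑ a, q a = 1 := by
    rw [hqdef, ← Finset.sum_div, ← hS'def, div_self hS'.ne']
  have hsum : D ≤ (1 - x) * ((2 + D)/2) := by
    calc D ≤ ∑ a, (1 - x) * ((p a + q a + |p a - q a|)/2) :=
            Finset.sum_le_sum fun a _ => hpoint a
      _ = (1 - x) * ((∑ a, p a + ∑ a, q a + D)/2) := by
            rw [← Finset.mul_sum, ← Finset.sum_div, hDdef]
            rw [Finset.sum_add_distrib, Finset.sum_add_distrib]
      _ = (1 - x) * ((2 + D)/2) := by rw [hsump, hsumq]; ring_nf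
  -- conclude
  have hkey := one_sub_exp_le hM0
  rw [← hxdef] at hkey
  have hfinal : D ≤ 2 * M := by nlinarith
  calc ∑ a, |Real.exp (θ a) / (∑ b, Real.exp (θ b))
            - Real.exp (θ' a) / (∑ b, Real.exp (θ' b))| = D := by
        rw [hDdef, hpdef, hqdef, hSdef, hS'def]
    _ ≤ 2 * M := hfinal
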